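/- Let n ≥ 2, let Ω ⊊ ℝⁿ be a domain (nonempty, open, connected) with topological boundary M = bΩ, and let ε > 0. Assume that every point x ∈ ℝⁿ with dist(x, M) < ε has a unique nearest point in M, and that the signed distance function δ (equal to dist(·, M) on the complement of Ω and to −dist(·, M) on Ω) is C² on the tube V_ε(M) = {x ∈ ℝⁿ : dist(x, M) < ε} with ‖∇δ‖ ≡ 1 there. Then for every p ∈ M and every unit vector v ∈ ℝⁿ with ∇δ(p)·v = 0, one has Hess δ(p)(v, v) ≤ 1/ε. -/

import Mathlib

open RealInnerProductSpace

noncomputable def Hess {n : ℕ} (δ : EuclideanSpace ℝ (Fin n) → ℝ)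
    (x v w : EuclideanSpace ℝ (Fin n)) : ℝ :=
  fderiv ℝ (fun y => fderiv ℝ δ y v) x w

section Aux

open Set Metric

variable {F : Type*} [NormedAddCommGroup F] [InnerProductSpace ℝ F] [CompleteSpace F]

lemma inner_gradient_apply (δ : F → ℝ) (x u : F) : ⟪gradient δ x, u⟫ = fderiv ℝ δ x u :=
  InnerProductSpace.toDual_symm_apply

lemma eikonal_normal_line (δ : F → ℝ) (T : Set F) (hT : IsOpen T)
    (hC2 : ContDiffOn ℝ 2 δ T) (hgrad : ∀ x ∈ T, ‖gradient δ x‖ = 1)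
    (p : F) (t₀ : ℝ) (ht₀ : 0 ≤ t₀)
    (hline : ∀ t ∈ Set.Icc 0 t₀, p - t • gradient δ p ∈ T) :
    δ (p - t₀ • gradient δ p) = δ p - t₀ := by
  set g := gradient δ p with hg
  have hpT : p ∈ T := by simpa using hline 0 ⟨le_rfl, ht₀⟩
  have hδdiff : ∀ x ∈ T, DifferentiableAt ℝ δ x := fun x hx =>
    ((hC2.differentiableOn two_ne_zero) x hx).differentiableAt (hT.mem_nhds hx)
  set f' : F → F →L[ℝ] ℝ := fun x => fderiv ℝ δ x with hf'def
  have hf'C1 : ContDiffOn ℝ 1 f' T := hC2.fderiv_of_isOpen hT (by norm_num)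
  have hf'diff : ∀ x ∈ T, DifferentiableAt ℝ f' x := fun x hx =>
    ((hf'C1.differentiableOn one_ne_zero) x hx).differentiableAt (hT.mem_nhds hx)
  set G : F → F := fun x => gradient δ x with hGdef
  set eL : StrongDual ℝ F ≃L[ℝ] F :=
    (InnerProductSpace.toDual ℝ F).symm.toContinuousLinearEquiv with heL
  have hGe : G = fun x => eL (f' x) := rfl
  have hGdiff : ∀ x ∈ T, DifferentiableAt ℝ G x := by
    intro x hx
    rw [hGe]
    exact (eL.differentiableAt).comp x (hf'diff x hx)
  have hGfderiv : ∀ x ∈ T, HasFDerivAt G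
      ((eL : StrongDual ℝ F →L[ℝ] F).comp (fderiv ℝ f' x)) x := by
    intro x hx
    rw [hGe]
    exact (eL.hasFDerivAt).comp x (hf'diff x hx).hasFDerivAt
  have hDG : ∀ x ∈ T, ∀ u w : F, ⟪fderiv ℝ G x u, w⟫ = fderiv ℝ f' x u w := by
    intro x hx u w
    rw [(hGfderiv x hx).fderiv]
    exact InnerProductSpace.toDual_symm_apply
  have hsymm : ∀ x ∈ T, ∀ u w : F, fderiv ℝ f' x u w = fderiv ℝ f' x w u := by
    intro x hx u w
    exact second_derivative_symmetric_of_eventually_of_real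
      (Filter.eventually_of_mem (hT.mem_nhds hx) fun y hy => (hδdiff y hy).hasFDerivAt)
      (hf'diff x hx).hasFDerivAt u w
  have hperp : ∀ x ∈ T, ∀ u : F, ⟪fderiv ℝ G x u, G x⟫ = 0 := by
    intro x hx u
    have hx1 : ∀ y ∈ T, ⟪G y, G y⟫ = (1:ℝ) := fun y hy => by
      rw [real_inner_self_eq_norm_sq, hgrad y hy]; norm_num
    have hF : HasFDerivAt (fun y => ⟪G y, G y⟫)
        ((fderivInnerCLM ℝ (G x, G x)).comp ((fderiv ℝ G x).prod (fderiv ℝ G x))) x :=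
      ((hGdiff x hx).hasFDerivAt).inner ℝ ((hGdiff x hx).hasFDerivAt)
    have hconst : fderiv ℝ (fun y => ⟪G y, G y⟫) x = 0 := by
      have hev : (fun y => ⟪G y, G y⟫) =ᶠ[nhds x] fun _ => (1:ℝ) :=
        Filter.eventually_of_mem (hT.mem_nhds hx) hx1
      rw [hev.fderiv_eq]; exact fderiv_const_apply _
    have h0 := hF.fderiv
    rw [hconst] at h0
    have happ := congrFun (congrArg DFunLike.coe h0.symm) u
    simp only [ContinuousLinearMap.comp_apply, ContinuousLinearMap.prod_apply,
      fderivInnerCLM_apply, ContinuousLinearMap.zero_apply] at happ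
    have hcomm : ⟪G x, fderiv ℝ G x u⟫ = ⟪fderiv ℝ G x u, G x⟫ := real_inner_comm _ _
    linarith [happ, hcomm.symm ▸ happ]
  have hzero : ∀ x ∈ T, fderiv ℝ G x (G x) = 0 := by
    intro x hx
    have h : ∀ u : F, ⟪fderiv ℝ G x (G x), u⟫ = 0 := fun u => by
      rw [hDG x hx, hsymm x hx, ← hDG x hx]
      exact hperp x hx u
    have := h (fderiv ℝ G x (G x))
    exact inner_self_eq_zero.mp this
  -- the curve along the normal line
  set c : ℝ → F := fun t => p - t • g with hc
  have hcderiv : ∀ t : ℝ, HasDerivAt c (-g) t := by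
    intro t
    simpa using ((hasDerivAt_id t).smul_const g).const_sub p
  have hccont : Continuous c := by
    exact continuous_const.sub (continuous_id.smul continuous_const)
  set w : ℝ → F := fun t => G (c t) - g with hw
  have hwderiv : ∀ t ∈ Icc 0 t₀, HasDerivAt w (fderiv ℝ G (c t) (w t)) t := by
    intro t ht
    have h1 : HasDerivAt (fun s => G (c s)) (fderiv ℝ G (c t) (-g)) t :=
      (((hGdiff _ (hline t ht)).hasFDerivAt).comp_hasDerivAt t (hcderiv t) :)
    have h2 : fderiv ℝ G (c t) (-g) = fderiv ℝ G (c t) (w t) := by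
      have hne : (-g : F) = w t - G (c t) := by show -g = (G (c t) - g) - G (c t); abel
      rw [hne, map_sub, hzero _ (hline t ht), sub_zero]
    rw [← h2]
    exact h1.sub_const g
  -- bound on the derivative operator norm over the compact segment
  have hGC1 : ContDiffOn ℝ 1 G T := by
    rw [hGe]
    exact ((eL : StrongDual ℝ F →L[ℝ] F).contDiff).comp_contDiffOn hf'C1
  have hDGcont : ContinuousOn (fun x => fderiv ℝ G x) T :=
    hGC1.continuousOn_fderiv_of_isOpen hT le_rfl
  obtain ⟨u, hu, hK⟩ : ∃ u ∈ Icc (0:ℝ) t₀, ∀ s ∈ Icc (0:ℝ) t₀,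
      ‖fderiv ℝ G (c s)‖ ≤ ‖fderiv ℝ G (c u)‖ := by
    obtain ⟨u, hu, hmax⟩ := IsCompact.exists_isMaxOn isCompact_Icc ⟨0, ⟨le_rfl, ht₀⟩⟩
      ((hDGcont.comp hccont.continuousOn hline).norm)
    exact ⟨u, hu, fun s hs => hmax hs⟩
  set K := ‖fderiv ℝ G (c u)‖ with hKdef
  have hgron : ∀ t ∈ Icc (0:ℝ) t₀, ‖w t‖ ≤ gronwallBound 0 K 0 (t - 0) := by
    apply norm_le_gronwallBound_of_norm_deriv_right_le
    · exact fun t ht => ((hwderiv t ht).continuousAt).continuousWithinAt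
    · exact fun t ht => (hwderiv t (Ico_subset_Icc_self ht)).hasDerivWithinAt
    · have hc0 : c 0 = p := by simp [hc]
      simp [hw, hc0, hGdef, hg]
    · intro t ht
      have := (fderiv ℝ G (c t)).le_opNorm (w t)
      calc ‖fderiv ℝ G (c t) (w t)‖ ≤ ‖fderiv ℝ G (c t)‖ * ‖w t‖ := this
        _ ≤ K * ‖w t‖ + 0 := by
            have := hK t (Ico_subset_Icc_self ht)
            nlinarith [norm_nonneg (w t)]
  have hwzero : ∀ t ∈ Icc (0:ℝ) t₀, G (c t) = g := by
    intro t ht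
    have h := hgron t ht
    rw [gronwallBound_ε0_δ0] at h
    have : w t = 0 := norm_le_zero_iff.mp h
    have := sub_eq_zero.mp (by rw [hw] at this; exact this)
    exact this
  -- δ decreases at unit rate along the line
  have hgg : ⟪g, g⟫ = (1:ℝ) := by
    rw [real_inner_self_eq_norm_sq, hgrad p hpT]; norm_num
  have hψ : ∀ t ∈ Icc (0:ℝ) t₀,
      HasDerivWithinAt (fun s => δ (c s) + s) 0 (Icc 0 t₀) t := by
    intro t ht
    have h1 : HasDerivAt (fun s => δ (c s)) (f' (c t) (-g)) t :=
      ((hδdiff _ (hline t ht)).hasFDerivAt).comp_hasDerivAt t (hcderiv t)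
    have h2 : f' (c t) (-g) = -1 := by
      have hi : ⟪G (c t), -g⟫ = f' (c t) (-g) := inner_gradient_apply δ (c t) (-g)
      rw [← hi, hwzero t ht, inner_neg_right, hgg]
    have h3 := h1.add (hasDerivAt_id t)
    rw [h2, neg_add_cancel] at h3
    exact h3.hasDerivWithinAt
  have key := Convex.norm_image_sub_le_of_norm_hasDerivWithin_le
    (f := fun s => δ (c s) + s) (f' := fun _ => (0:ℝ)) (C := 0)
    hψ (fun t _ => by simp) (convex_Icc 0 t₀) (left_mem_Icc.mpr ht₀) (right_mem_Icc.mpr ht₀)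
  have hc0 : c 0 = p := by simp [hc]
  have key2 : δ (c t₀) + t₀ = δ (c 0) + 0 := by
    have h0 : (0:ℝ) * ‖t₀ - (0:ℝ)‖ = 0 := by ring
    rw [h0, norm_le_zero_iff, sub_eq_zero] at key
    exact key
  rw [hc0] at key2
  have : δ (c t₀) = δ p - t₀ := by linarith
  simpa [hc] using this

-- the main estimate, in a clean local form
set_option maxHeartbeats 3000000 in
lemma eikonal_hess_le (δ : F → ℝ) (p : F) (ε : ℝ) (hε : 0 < ε)
    (hC2 : ContDiffOn ℝ 2 δ (Metric.ball p ε))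
    (hgrad : ∀ x ∈ Metric.ball p ε, ‖gradient δ x‖ = 1)
    (v : F) (hv : ‖v‖ = 1) (hperp : ⟪gradient δ p, v⟫ = 0) :
    fderiv ℝ (fun y => fderiv ℝ δ y v) p v ≤ 1 / ε := by
  by_contra hcon
  push_neg at hcon
  set B := Metric.ball p ε with hB
  have hBopen : IsOpen B := Metric.isOpen_ball
  have hpB : p ∈ B := Metric.mem_ball_self hε
  set g := gradient δ p with hg
  have hg1 : ‖g‖ = 1 := hgrad p hpB
  have hδdiff : ∀ x ∈ B, DifferentiableAt ℝ δ x := fun x hx =>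
    ((hC2.differentiableOn two_ne_zero) x hx).differentiableAt (hBopen.mem_nhds hx)
  set f' : F → F →L[ℝ] ℝ := fun x => fderiv ℝ δ x with hf'def
  have hf'C1 : ContDiffOn ℝ 1 f' B := hC2.fderiv_of_isOpen hBopen (by norm_num)
  have hf'diff : ∀ x ∈ B, DifferentiableAt ℝ f' x := fun x hx =>
    ((hf'C1.differentiableOn one_ne_zero) x hx).differentiableAt (hBopen.mem_nhds hx)
  -- identification of the Hessian quadratic form
  set A : F →L[ℝ] F →L[ℝ] ℝ := fderiv ℝ f' p with hA
  have hHess : fderiv ℝ (fun y => fderiv ℝ δ y v) p v = A v v := by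
    have h1 : HasFDerivAt (fun y => f' y v)
        ((ContinuousLinearMap.apply ℝ ℝ v).comp A) p :=
      ((ContinuousLinearMap.apply ℝ ℝ v).hasFDerivAt).comp p (hf'diff p hpB).hasFDerivAt
    rw [h1.fderiv]; rfl
  set H := A v v with hH
  have hεH : 1 / ε < H := by rw [← hHess]; exact hcon
  have hHpos : 0 < H := lt_trans (by positivity) hεH
  have h1Hε : 1 / H < ε := by
    rw [div_lt_iff₀ hHpos]
    rw [div_lt_iff₀ hε] at hεH
    nlinarith
  set t₀ : ℝ := (1 / H + ε) / 2 with ht₀def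
  have ht₀pos : 0 < t₀ := by positivity
  have ht₀ε : t₀ < ε := by rw [ht₀def]; linarith
  have hc1 : 1 / t₀ < H := by
    have h1 : 1 / H < t₀ := by rw [ht₀def]; linarith
    calc 1 / t₀ < 1 / (1 / H) := by
          apply one_div_lt_one_div_of_lt
          · positivity
          · exact h1
      _ = H := one_div_one_div H
  clear_value t₀
  set cc : ℝ := (1 / t₀ + H) / 2 with hccdef
  have hcc1 : 1 / t₀ < cc := by rw [hccdef]; linarith
  have hccH : cc < H := by rw [hccdef]; linarith
  have hccpos : 0 < cc := lt_trans (by positivity) hcc1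
  clear_value cc
  -- the line s ↦ p + s v
  set L : ℝ → F := fun s => p + s • v with hL
  have hLmem : ∀ s : ℝ, |s| < ε → L s ∈ B := by
    intro s hs
    rw [hB, Metric.mem_ball, dist_eq_norm]
    simpa [hL, norm_smul, hv] using hs
  have hLderiv : ∀ s : ℝ, HasDerivAt L v s := by
    intro s
    have h := ((hasDerivAt_id s).smul_const v).const_add p
    rw [one_smul] at h
    exact h
  have hLcont : Continuous L := continuous_const.add (continuous_id.smul continuous_const)
  set Dφ : ℝ → ℝ := fun s => f' (L s) v with hDφ
  set h2 : ℝ → ℝ := fun s => fderiv ℝ f' (L s) v v with hh2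
  have hφderiv : ∀ s : ℝ, |s| < ε → HasDerivAt (fun r => δ (L r)) (Dφ s) s := by
    intro s hs
    exact ((hδdiff _ (hLmem s hs)).hasFDerivAt).comp_hasDerivAt s (hLderiv s)
  have hDφderiv : ∀ s : ℝ, |s| < ε → HasDerivAt Dφ (h2 s) s := by
    intro s hs
    have h1 : HasFDerivAt (fun y => f' y v)
        ((ContinuousLinearMap.apply ℝ ℝ v).comp (fderiv ℝ f' (L s))) (L s) :=
      ((ContinuousLinearMap.apply ℝ ℝ v).hasFDerivAt).comp (L s) (hf'diff _ (hLmem s hs)).hasFDerivAt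
    exact h1.comp_hasDerivAt s (hLderiv s)
  -- continuity of s ↦ h2 s at 0
  have hDFcont : ContinuousOn (fderiv ℝ f') B :=
    hf'C1.continuousOn_fderiv_of_isOpen hBopen le_rfl
  have hL0 : L 0 = p := by simp [hL]
  have hconth2 : ContinuousAt h2 0 := by
    have c1 : ContinuousAt (fderiv ℝ f') p := hDFcont.continuousAt (hBopen.mem_nhds hpB)
    have c2 : ContinuousAt (fun s => fderiv ℝ f' (L s)) 0 := by
      rw [← hL0] at c1
      exact c1.comp hLcont.continuousAt
    have c3 : Continuous fun (A' : F →L[ℝ] F →L[ℝ] ℝ) => A' v v := by fun_prop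
    exact c3.continuousAt.comp c2
  have hh20 : h2 0 = H := by
    show fderiv ℝ f' (L 0) v v = H
    rw [hL0]
  clear_value H
  -- choose a where h2 ≥ cc
  have hev : ∀ᶠ s in nhds (0:ℝ), cc < h2 s := by
    have : Set.Ioi cc ∈ nhds (h2 0) := Ioi_mem_nhds (by rw [hh20]; exact hccH)
    exact hconth2 this
  obtain ⟨r, hr, hball⟩ := Metric.eventually_nhds_iff_ball.mp hev
  set a : ℝ := min (r / 2) (ε / 2) with hadef
  have hapos : 0 < a := by positivity
  have haε : a < ε := lt_of_le_of_lt (min_le_right _ _) (by linarith)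
  have hah2 : ∀ s ∈ Icc (0:ℝ) a, cc < h2 s := by
    intro s hs
    apply hball
    rw [Metric.mem_ball, Real.dist_eq, sub_zero]
    have : |s| ≤ a := abs_le.mpr ⟨by linarith [hs.1], hs.2⟩
    calc |s| ≤ a := this
      _ ≤ r / 2 := min_le_left _ _
      _ < r := by linarith
  have hsmem : ∀ s ∈ Icc (0:ℝ) a, |s| < ε := by
    intro s hs
    have : |s| ≤ a := abs_le.mpr ⟨by linarith [hs.1], hs.2⟩
    linarith
  clear_value a
  -- first monotonicity: Dφ s ≥ cc * s on [0, a]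
  have hmono1 : ∀ s ∈ Icc (0:ℝ) a, cc * s ≤ Dφ s := by
    have hθ : ∀ s ∈ Icc (0:ℝ) a, HasDerivAt (fun r => Dφ r - cc * r) (h2 s - cc) s := by
      intro s hs
      have h := (hDφderiv s (hsmem s hs)).sub ((hasDerivAt_id s).const_mul cc)
      rw [mul_one] at h
      exact h
    have hmono := monotoneOn_of_deriv_nonneg (convex_Icc 0 a)
      (fun s hs => (hθ s hs).continuousAt.continuousWithinAt)
      (fun s hs => ((hθ s (interior_subset hs)).differentiableAt).differentiableWithinAt)
      (fun s hs => by
        rw [(hθ s (interior_subset hs)).deriv]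
        have := hah2 s (interior_subset hs)
        linarith)
    intro s hs
    have h0 : (0:ℝ) ∈ Icc (0:ℝ) a := ⟨le_rfl, hapos.le⟩
    have := hmono h0 hs hs.1
    have hDφ0 : Dφ 0 = 0 := by
      have hre : Dφ 0 = fderiv ℝ δ (L 0) v := rfl
      rw [hre, hL0, ← inner_gradient_apply δ p v]
      exact hperp
    simp only [hDφ0, mul_zero, sub_zero, zero_sub] at this
    linarith [this]
  -- second monotonicity: δ (L s) - δ p ≥ cc/2 * s^2 on [0, a]
  have hmono2 : cc / 2 * a ^ 2 ≤ δ (L a) - δ p := by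
    have hκ : ∀ s ∈ Icc (0:ℝ) a,
        HasDerivAt (fun r => δ (L r) - cc / 2 * r ^ 2) (Dφ s - cc * s) s := by
      intro s hs
      have hp2 : HasDerivAt (fun r : ℝ => cc / 2 * r ^ 2) (cc / 2 * (2 * s ^ 1)) s :=
        (hasDerivAt_pow 2 s).const_mul (cc / 2)
      have := (hφderiv s (hsmem s hs)).sub hp2
      have e : Dφ s - cc * s = Dφ s - cc / 2 * (2 * s ^ 1) := by ring
      rw [e]
      exact this
    have hmono := monotoneOn_of_deriv_nonneg (convex_Icc 0 a)
      (fun s hs => (hκ s hs).continuousAt.continuousWithinAt)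
      (fun s hs => ((hκ s (interior_subset hs)).differentiableAt).differentiableWithinAt)
      (fun s hs => by
        rw [(hκ s (interior_subset hs)).deriv]
        have := hmono1 s (interior_subset hs)
        linarith)
    have h0 : (0:ℝ) ∈ Icc (0:ℝ) a := ⟨le_rfl, hapos.le⟩
    have ha : a ∈ Icc (0:ℝ) a := ⟨hapos.le, le_rfl⟩
    have := hmono h0 ha hapos.le
    simp only [hL0] at this
    nlinarith [this]
  -- the normal line value
  have hlineB : ∀ t ∈ Icc (0:ℝ) t₀, p - t • g ∈ B := by
    intro t ht
    rw [hB, Metric.mem_ball, dist_eq_norm]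
    have : p - t • g - p = -(t • g) := by abel
    rw [this, norm_neg, norm_smul, hg1, mul_one]
    rw [Real.norm_eq_abs, abs_of_nonneg ht.1]
    linarith [ht.2]
  have hnormal : δ (p - t₀ • g) = δ p - t₀ :=
    eikonal_normal_line δ B hBopen hC2 hgrad p t₀ ht₀pos.le hlineB
  -- Lipschitz estimate on the ball
  have hlip : ∀ x ∈ B, ∀ y ∈ B, ‖δ x - δ y‖ ≤ 1 * ‖x - y‖ := by
    intro x hx y hy
    apply Convex.norm_image_sub_le_of_norm_hasFDerivWithin_le
      (f' := fun x => f' x)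
      (fun z hz => (hδdiff z hz).hasFDerivAt.hasFDerivWithinAt)
      (fun z hz => ?_) (convex_ball p ε) hy hx
    have : ‖f' z‖ = ‖gradient δ z‖ :=
      ((InnerProductSpace.toDual ℝ F).symm.norm_map (f' z)).symm
    rw [this, hgrad z hz]
  -- combine
  have hq : p - t₀ • g ∈ B := hlineB t₀ ⟨ht₀pos.le, le_rfl⟩
  have hx : L a ∈ B := hLmem a (by rw [abs_of_pos hapos]; exact haε)
  have hnorm : ‖L a - (p - t₀ • g)‖ ^ 2 = a ^ 2 + t₀ ^ 2 := by
    have hd : L a - (p - t₀ • g) = a • v + t₀ • g := by show p + a • v - (p - t₀ • g) = _; abel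
    have hvg : ⟪v, g⟫ = (0:ℝ) := by rw [real_inner_comm]; exact hperp
    rw [hd, norm_add_sq_real, norm_smul, norm_smul, hv, hg1,
      real_inner_smul_left, real_inner_smul_right, hvg,
      Real.norm_eq_abs, Real.norm_eq_abs, abs_of_pos hapos, abs_of_pos ht₀pos]
    ring
  have hnormle : ‖L a - (p - t₀ • g)‖ ≤ t₀ + a ^ 2 / (2 * t₀) := by
    have hq0 : (0:ℝ) ≤ t₀ + a ^ 2 / (2 * t₀) := by positivity
    have h2tq : 2 * t₀ * (a ^ 2 / (2 * t₀)) = a ^ 2 := by field_simp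
    have hexp : (t₀ + a ^ 2 / (2 * t₀)) ^ 2
        = t₀ ^ 2 + 2 * t₀ * (a ^ 2 / (2 * t₀)) + (a ^ 2 / (2 * t₀)) ^ 2 := by ring
    have hsq : ‖L a - (p - t₀ • g)‖ ^ 2 ≤ (t₀ + a ^ 2 / (2 * t₀)) ^ 2 := by
      rw [hnorm, hexp, h2tq]
      linarith [sq_nonneg (a ^ 2 / (2 * t₀))]
    have hs := Real.sqrt_le_sqrt hsq
    rwa [Real.sqrt_sq (norm_nonneg _), Real.sqrt_sq hq0] at hs
  have hupper : δ (L a) - δ p ≤ a ^ 2 / (2 * t₀) := by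
    have h := hlip (L a) hx (p - t₀ • g) hq
    rw [hnormal] at h
    have habs : δ (L a) - (δ p - t₀) ≤ ‖δ (L a) - (δ p - t₀)‖ := le_abs_self _
    have := le_trans habs h
    rw [one_mul] at this
    linarith [le_trans this hnormle]
  -- contradiction
  have hfin : cc / 2 * a ^ 2 ≤ a ^ 2 / (2 * t₀) := le_trans hmono2 hupper
  have ha2pos : 0 < a ^ 2 := pow_pos hapos 2
  rw [show a ^ 2 / (2 * t₀) = 1 / t₀ * a ^ 2 / 2 from by ring] at hfin
  nlinarith [hfin, hcc1, ha2pos]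

end Aux

/-- Let `Ω ⊊ ℝⁿ` be a domain with boundary `M = bΩ` and `ε > 0`.
Assume every point at distance `< ε` from `M` has a unique nearest point in `M`, and
that the signed distance function `δ` (equal to `dist(·,M)` outside `Ω` and to
`−dist(·,M)` on `Ω`) is `C²` on the tube `V_ε(M) = {x : dist(x,M) < ε}` with
`‖∇δ‖ ≡ 1` there. Then for every `p ∈ M` and every unit vector `v` tangent to `M`
at `p` (i.e. `∇δ(p)·v = 0`), the principal curvature `Hess δ(p)(v,v)` is `≤ 1/ε`. -/
theorem principal_curvature_le_inv_tube_radius {n : ℕ} (hn : 2 ≤ n)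
    (Ω : Set (EuclideanSpace ℝ (Fin n))) (hne : Ω.Nonempty) (hopen : IsOpen Ω)
    (hconn : IsConnected Ω) (hproper : Ω ≠ Set.univ)
    (M : Set (EuclideanSpace ℝ (Fin n))) (hM : M = frontier Ω)
    (ε : ℝ) (hε : 0 < ε)
    (hunique : ∀ x : EuclideanSpace ℝ (Fin n), Metric.infDist x M < ε →
        ∃! p, p ∈ M ∧ dist x p = Metric.infDist x M)
    (δ : EuclideanSpace ℝ (Fin n) → ℝ)
    (hδout : ∀ x ∉ Ω, δ x = Metric.infDist x M)
    (hδin : ∀ x ∈ Ω, δ x = -Metric.infDist x M)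
    (hδC2 : ContDiffOn ℝ 2 δ {x | Metric.infDist x M < ε})
    (hgrad : ∀ x : EuclideanSpace ℝ (Fin n), Metric.infDist x M < ε →
        ‖gradient δ x‖ = 1) :
    ∀ p ∈ M, ∀ v : EuclideanSpace ℝ (Fin n), ‖v‖ = 1 →
      ⟪gradient δ p, v⟫ = 0 → Hess δ p v v ≤ 1 / ε := by
  intro p hp v hv hvperp
  have hball : Metric.ball p ε ⊆ {x | Metric.infDist x M < ε} := by
    intro z hz
    have h1 : Metric.infDist z M ≤ dist z p := Metric.infDist_le_dist_of_mem hp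
    have h2 : dist z p < ε := Metric.mem_ball.mp hz
    simpa using lt_of_le_of_lt h1 h2
  have := eikonal_hess_le δ p ε hε (hδC2.mono hball)
    (fun x hx => hgrad x (hball hx)) v hv hvperp
  exact this
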